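/- Let M be a set of Borel probability measures on ℝⁿ, let D be a metric on M, and let G be a group (under composition) of Borel-measurable bijections of ℝⁿ such that M is closed under pushforward by every T ∈ G and D(P ∘ T⁻¹, R ∘ T⁻¹) = D(P, R) for all P, R ∈ M and T ∈ G (G is a group of isometries of D). Let Z be a measurable space with probability measure Q, and consider maps F_i, F_j, F_k : Z → M such that for each T ∈ G the function z ↦ D²(F_i(z), F_j(z) ∘ T⁻¹) is Q-integrable (and similarly for the other pairs), and such that the infimum over T ∈ G of ∫ D²(F_i(z), F_j(z) ∘ T⁻¹) dQ(z) is attained. Then d(F_i, F_j) := min_{T ∈ G} (∫ D²(F_i(z), F_j(z) ∘ T⁻¹) dQ(z))^{1/2} satisfies: (i) d(F_i, F_j) = d(F_j, F_i); (ii) d(F_i, F_k) ≤ d(F_i, F_j) + d(F_j, F_k); and (iii) d(F_i, F_j) = 0 if and only if there exists T ∈ G such that F_i(z) = F_j(z) ∘ T⁻¹ for Q-almost every z. -/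

import Mathlib

open MeasureTheory


lemma l2_triangle {Z : Type*} [MeasurableSpace Z] (Q : Measure Z) (a b : Z → ℝ)
    (ha0 : ∀ z, 0 ≤ a z) (hb0 : ∀ z, 0 ≤ b z)
    (ha : Integrable (fun z => a z ^ 2) Q) (hb : Integrable (fun z => b z ^ 2) Q) :
    Integrable (fun z => (a z + b z) ^ 2) Q ∧
    Real.sqrt (∫ z, (a z + b z) ^ 2 ∂Q) ≤
      Real.sqrt (∫ z, a z ^ 2 ∂Q) + Real.sqrt (∫ z, b z ^ 2 ∂Q) := by
  have hams : AEStronglyMeasurable a Q := by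
    have h := Real.continuous_sqrt.comp_aestronglyMeasurable ha.aestronglyMeasurable
    simpa [Real.sqrt_sq (ha0 _)] using h
  have hbms : AEStronglyMeasurable b Q := by
    have h := Real.continuous_sqrt.comp_aestronglyMeasurable hb.aestronglyMeasurable
    simpa [Real.sqrt_sq (hb0 _)] using h
  have hma : MemLp a 2 Q := (memLp_two_iff_integrable_sq hams).mpr ha
  have hmb : MemLp b 2 Q := (memLp_two_iff_integrable_sq hbms).mpr hb
  have hsum : Integrable (fun z => a z ^ 2 + b z ^ 2) Q := ha.add hb
  have hab : Integrable (fun z => a z * b z) Q := by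
    refine hsum.mono (hams.mul hbms) (Filter.Eventually.of_forall fun z => ?_)
    rw [Real.norm_of_nonneg (mul_nonneg (ha0 z) (hb0 z)),
      Real.norm_of_nonneg (by positivity)]
    nlinarith [sq_nonneg (a z - b z)]
  have hiq : (fun z => (a z + b z) ^ 2) =
      fun z => a z ^ 2 + 2 * (a z * b z) + b z ^ 2 := funext fun z => by ring
  have hint2 : Integrable (fun z => (a z + b z) ^ 2) Q := by
    rw [hiq]
    exact Integrable.add (ha.add (hab.const_mul 2)) hb
  refine ⟨hint2, ?_⟩
  have h22 : (2 : ℝ).HolderConjugate 2 := Real.HolderConjugate.two_two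
  have hCS : ∫ z, a z * b z ∂Q ≤
      Real.sqrt (∫ z, a z ^ 2 ∂Q) * Real.sqrt (∫ z, b z ^ 2 ∂Q) := by
    have h := integral_mul_le_Lp_mul_Lq_of_nonneg h22 (Filter.Eventually.of_forall ha0)
      (Filter.Eventually.of_forall hb0) (by simpa using hma) (by simpa using hmb)
    have hr : ∀ x : ℝ, 0 ≤ x → x ^ (2 : ℝ) = x ^ 2 := fun x hx => by
      rw [show (2 : ℝ) = ((2 : ℕ) : ℝ) by norm_num, Real.rpow_natCast]
    calc ∫ z, a z * b z ∂Q ≤ (∫ z, a z ^ (2:ℝ) ∂Q) ^ (1/2 : ℝ) *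
          (∫ z, b z ^ (2:ℝ) ∂Q) ^ (1/2 : ℝ) := h
      _ = Real.sqrt (∫ z, a z ^ 2 ∂Q) * Real.sqrt (∫ z, b z ^ 2 ∂Q) := by
          simp_rw [hr _ (ha0 _), hr _ (hb0 _), ← Real.sqrt_eq_rpow]
  set sa := Real.sqrt (∫ z, a z ^ 2 ∂Q) with hsa
  set sb := Real.sqrt (∫ z, b z ^ 2 ∂Q) with hsb
  have hsa2 : sa ^ 2 = ∫ z, a z ^ 2 ∂Q :=
    Real.sq_sqrt (integral_nonneg fun z => sq_nonneg _)
  have hsb2 : sb ^ 2 = ∫ z, b z ^ 2 ∂Q :=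
    Real.sq_sqrt (integral_nonneg fun z => sq_nonneg _)
  have hmain : ∫ z, (a z + b z) ^ 2 ∂Q ≤ (sa + sb) ^ 2 := by
    have hsum : ∫ z, (a z + b z) ^ 2 ∂Q =
        (∫ z, a z ^ 2 ∂Q) + 2 * (∫ z, a z * b z ∂Q) + ∫ z, b z ^ 2 ∂Q := by
      have hA : Integrable (fun z => a z ^ 2 + 2 * (a z * b z)) Q :=
        ha.add (hab.const_mul 2)
      rw [hiq, integral_add hA hb, integral_add ha (hab.const_mul 2), integral_const_mul]
    rw [hsum]
    nlinarith [hCS, hsa2, hsb2]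
  calc Real.sqrt (∫ z, (a z + b z) ^ 2 ∂Q) ≤ Real.sqrt ((sa + sb) ^ 2) :=
        Real.sqrt_le_sqrt hmain
    _ = sa + sb := Real.sqrt_sq (by positivity)


/-- Stochastic shape distances built from a ground metric `D` on a set `M` of Borel probability
measures on `ℝⁿ` and a group `G` of measurable bijections acting isometrically by pushforward:
symmetry, triangle inequality, and `d = 0` iff the two stochastic representations agree up to
some `T ∈ G`, `Q`-almost everywhere. -/
theorem stmt2 {n : ℕ} {Z : Type*} [MeasurableSpace Z]
    (Q : Measure Z) [IsProbabilityMeasure Q]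
    (M : Set (Measure (Fin n → ℝ)))
    (hM : ∀ P ∈ M, IsProbabilityMeasure P)
    (D : Measure (Fin n → ℝ) → Measure (Fin n → ℝ) → ℝ)
    -- `D` is a metric on `M`
    (hD_nonneg : ∀ P ∈ M, ∀ R ∈ M, 0 ≤ D P R)
    (hD_eq_zero : ∀ P ∈ M, ∀ R ∈ M, (D P R = 0 ↔ P = R))
    (hD_symm : ∀ P ∈ M, ∀ R ∈ M, D P R = D R P)
    (hD_tri : ∀ P ∈ M, ∀ R ∈ M, ∀ S ∈ M, D P S ≤ D P R + D R S)
    -- `G` is a group (under composition) of measurable bijections of `ℝⁿ`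
    (G : Set ((Fin n → ℝ) ≃ᵐ (Fin n → ℝ)))
    (hG_one : MeasurableEquiv.refl (Fin n → ℝ) ∈ G)
    (hG_mul : ∀ T₁ ∈ G, ∀ T₂ ∈ G, T₁.trans T₂ ∈ G)
    (hG_inv : ∀ T ∈ G, T.symm ∈ G)
    -- `M` is closed under pushforward by every `T ∈ G`, and `G` acts by isometries of `D`
    (hG_closed : ∀ P ∈ M, ∀ T ∈ G, Measure.map T P ∈ M)
    (hG_iso : ∀ P ∈ M, ∀ R ∈ M, ∀ T ∈ G,
      D (Measure.map T P) (Measure.map T R) = D P R)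
    -- the three stochastic networks
    (Fi Fj Fk : Z → Measure (Fin n → ℝ))
    (hFi : ∀ z, Fi z ∈ M) (hFj : ∀ z, Fj z ∈ M) (hFk : ∀ z, Fk z ∈ M)
    -- integrability of the squared ground metric, for every alignment `T ∈ G`
    (hInt : ∀ F ∈ ({Fi, Fj, Fk} : Set (Z → Measure (Fin n → ℝ))),
      ∀ F' ∈ ({Fi, Fj, Fk} : Set (Z → Measure (Fin n → ℝ))), ∀ T ∈ G,
        Integrable (fun z => D (F z) (Measure.map T (F' z)) ^ 2) Q)
    -- the infimum over `T ∈ G` is attained for each relevant pair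
    (hattained : ∀ F ∈ ({Fi, Fj, Fk} : Set (Z → Measure (Fin n → ℝ))),
      ∀ F' ∈ ({Fi, Fj, Fk} : Set (Z → Measure (Fin n → ℝ))),
        ∃ T ∈ G, ∀ T' ∈ G,
          (∫ z, D (F z) (Measure.map T (F' z)) ^ 2 ∂Q) ≤
          (∫ z, D (F z) (Measure.map T' (F' z)) ^ 2 ∂Q))
    -- the stochastic shape distance
    (d : (Z → Measure (Fin n → ℝ)) → (Z → Measure (Fin n → ℝ)) → ℝ)
    (hd : ∀ F F' : Z → Measure (Fin n → ℝ), d F F' =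
      Real.sqrt (sInf {r : ℝ | ∃ T ∈ G,
        r = ∫ z, D (F z) (Measure.map T (F' z)) ^ 2 ∂Q})) :
    d Fi Fj = d Fj Fi ∧
    d Fi Fk ≤ d Fi Fj + d Fj Fk ∧
    (d Fi Fj = 0 ↔ ∃ T ∈ G, ∀ᵐ z ∂Q, Fi z = Measure.map T (Fj z)) := by
  -- memberships in the triple set
  have memi : Fi ∈ ({Fi, Fj, Fk} : Set (Z → Measure (Fin n → ℝ))) := Set.mem_insert _ _
  have memj : Fj ∈ ({Fi, Fj, Fk} : Set (Z → Measure (Fin n → ℝ))) :=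
    Set.mem_insert_of_mem _ (Set.mem_insert _ _)
  have memk : Fk ∈ ({Fi, Fj, Fk} : Set (Z → Measure (Fin n → ℝ))) :=
    Set.mem_insert_of_mem _ (Set.mem_insert_of_mem _ rfl)
  -- nonnegativity of the integrals
  have val_nonneg : ∀ (F F' : Z → Measure (Fin n → ℝ)) (T : (Fin n → ℝ) ≃ᵐ (Fin n → ℝ)),
      0 ≤ ∫ z, D (F z) (Measure.map T (F' z)) ^ 2 ∂Q :=
    fun F F' T => integral_nonneg fun z => sq_nonneg _
  -- basic facts about the candidate sets
  have hne : ∀ F F' : Z → Measure (Fin n → ℝ),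
      ({r : ℝ | ∃ T ∈ G, r = ∫ z, D (F z) (Measure.map T (F' z)) ^ 2 ∂Q}).Nonempty :=
    fun F F' => ⟨_, _, hG_one, rfl⟩
  have hbdd : ∀ F F' : Z → Measure (Fin n → ℝ),
      BddBelow {r : ℝ | ∃ T ∈ G, r = ∫ z, D (F z) (Measure.map T (F' z)) ^ 2 ∂Q} := by
    rintro F F'
    exact ⟨0, by rintro r ⟨T, hT, rfl⟩; exact val_nonneg F F' T⟩
  -- the infimum is attained: sInf equals the minimal value
  have hinf : ∀ (F F' : Z → Measure (Fin n → ℝ)) (T : (Fin n → ℝ) ≃ᵐ (Fin n → ℝ)), T ∈ G →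
      (∀ T' ∈ G, (∫ z, D (F z) (Measure.map T (F' z)) ^ 2 ∂Q) ≤
        ∫ z, D (F z) (Measure.map T' (F' z)) ^ 2 ∂Q) →
      sInf {r : ℝ | ∃ T ∈ G, r = ∫ z, D (F z) (Measure.map T (F' z)) ^ 2 ∂Q} =
        ∫ z, D (F z) (Measure.map T (F' z)) ^ 2 ∂Q := by
    intro F F' T hT hmin
    refine IsLeast.csInf_eq ⟨⟨T, hT, rfl⟩, ?_⟩
    rintro r ⟨T', hT', rfl⟩
    exact hmin T' hT'
  -- pointwise swap identity
  have swap : ∀ (F F' : Z → Measure (Fin n → ℝ)), (∀ z, F z ∈ M) → (∀ z, F' z ∈ M) →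
      ∀ (z : Z) (T : (Fin n → ℝ) ≃ᵐ (Fin n → ℝ)), T ∈ G →
      D (F z) (Measure.map T (F' z)) = D (F' z) (Measure.map T.symm (F z)) := by
    intro F F' hF hF' z T hT
    have h1 : Measure.map T (Measure.map T.symm (F z)) = F z := MeasurableEquiv.map_map_symm T
    calc D (F z) (Measure.map T (F' z))
        = D (Measure.map T (F' z)) (F z) :=
          hD_symm _ (hF z) _ (hG_closed _ (hF' z) _ hT)
      _ = D (Measure.map T (F' z)) (Measure.map T (Measure.map T.symm (F z))) := by rw [h1]
      _ = D (F' z) (Measure.map T.symm (F z)) :=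
          hG_iso _ (hF' z) _ (hG_closed _ (hF z) _ (hG_inv T hT)) T hT
  -- symmetry: the two candidate sets coincide
  have hset : {r : ℝ | ∃ T ∈ G, r = ∫ z, D (Fi z) (Measure.map T (Fj z)) ^ 2 ∂Q} =
      {r : ℝ | ∃ T ∈ G, r = ∫ z, D (Fj z) (Measure.map T (Fi z)) ^ 2 ∂Q} := by
    ext r
    constructor
    · rintro ⟨T, hT, rfl⟩
      refine ⟨T.symm, hG_inv T hT, ?_⟩
      refine integral_congr_ae (Filter.Eventually.of_forall fun z => ?_)
      simp only [swap Fi Fj hFi hFj z T hT]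
    · rintro ⟨T, hT, rfl⟩
      refine ⟨T.symm, hG_inv T hT, ?_⟩
      refine integral_congr_ae (Filter.Eventually.of_forall fun z => ?_)
      simp only [swap Fj Fi hFj hFi z T hT]
  have hsymm : d Fi Fj = d Fj Fi := by rw [hd, hd, hset]
  -- triangle inequality
  have htriangle : d Fi Fk ≤ d Fi Fj + d Fj Fk := by
    obtain ⟨T₁, hT₁, hmin₁⟩ := hattained Fi memi Fj memj
    obtain ⟨T₂, hT₂, hmin₂⟩ := hattained Fj memj Fk memk
    set a : Z → ℝ := fun z => D (Fi z) (Measure.map T₁ (Fj z)) with ha_def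
    set b : Z → ℝ := fun z => D (Fj z) (Measure.map T₂ (Fk z)) with hb_def
    have ha0 : ∀ z, 0 ≤ a z := fun z => hD_nonneg _ (hFi z) _ (hG_closed _ (hFj z) _ hT₁)
    have hb0 : ∀ z, 0 ≤ b z := fun z => hD_nonneg _ (hFj z) _ (hG_closed _ (hFk z) _ hT₂)
    have ha : Integrable (fun z => a z ^ 2) Q := hInt Fi memi Fj memj T₁ hT₁
    have hb : Integrable (fun z => b z ^ 2) Q := hInt Fj memj Fk memk T₂ hT₂
    obtain ⟨hint_ab, htri2⟩ := l2_triangle Q a b ha0 hb0 ha hb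
    set U : (Fin n → ℝ) ≃ᵐ (Fin n → ℝ) := T₂.trans T₁ with hU_def
    have hU : U ∈ G := hG_mul T₂ hT₂ T₁ hT₁
    have hmap : ∀ z, Measure.map U (Fk z) = Measure.map T₁ (Measure.map T₂ (Fk z)) := by
      intro z
      rw [Measure.map_map T₁.measurable T₂.measurable]
      rfl
    have hpt : ∀ z, D (Fi z) (Measure.map U (Fk z)) ≤ a z + b z := by
      intro z
      calc D (Fi z) (Measure.map U (Fk z))
          ≤ D (Fi z) (Measure.map T₁ (Fj z)) +
            D (Measure.map T₁ (Fj z)) (Measure.map U (Fk z)) :=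
            hD_tri _ (hFi z) _ (hG_closed _ (hFj z) _ hT₁) _ (hG_closed _ (hFk z) _ hU)
        _ = a z + b z := by
            rw [hmap z, hG_iso _ (hFj z) _ (hG_closed _ (hFk z) _ hT₂) _ hT₁]
    have h1 : (∫ z, D (Fi z) (Measure.map U (Fk z)) ^ 2 ∂Q) ≤ ∫ z, (a z + b z) ^ 2 ∂Q := by
      refine integral_mono (hInt Fi memi Fk memk U hU) hint_ab fun z => ?_
      exact pow_le_pow_left₀ (hD_nonneg _ (hFi z) _ (hG_closed _ (hFk z) _ hU)) (hpt z) 2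
    have h2 : sInf {r : ℝ | ∃ T ∈ G, r = ∫ z, D (Fi z) (Measure.map T (Fk z)) ^ 2 ∂Q} ≤
        ∫ z, D (Fi z) (Measure.map U (Fk z)) ^ 2 ∂Q :=
      csInf_le (hbdd Fi Fk) ⟨U, hU, rfl⟩
    rw [hd, hd, hd, hinf Fi Fj T₁ hT₁ hmin₁, hinf Fj Fk T₂ hT₂ hmin₂]
    calc Real.sqrt (sInf {r : ℝ | ∃ T ∈ G, r = ∫ z, D (Fi z) (Measure.map T (Fk z)) ^ 2 ∂Q})
        ≤ Real.sqrt (∫ z, D (Fi z) (Measure.map U (Fk z)) ^ 2 ∂Q) := Real.sqrt_le_sqrt h2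
      _ ≤ Real.sqrt (∫ z, (a z + b z) ^ 2 ∂Q) := Real.sqrt_le_sqrt h1
      _ ≤ Real.sqrt (∫ z, a z ^ 2 ∂Q) + Real.sqrt (∫ z, b z ^ 2 ∂Q) := htri2
  -- zero iff aligned a.e.
  have hzero : d Fi Fj = 0 ↔ ∃ T ∈ G, ∀ᵐ z ∂Q, Fi z = Measure.map T (Fj z) := by
    obtain ⟨T₀, hT₀, hmin₀⟩ := hattained Fi memi Fj memj
    rw [hd, hinf Fi Fj T₀ hT₀ hmin₀]
    constructor
    · intro h0
      have hval : (∫ z, D (Fi z) (Measure.map T₀ (Fj z)) ^ 2 ∂Q) = 0 :=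
        le_antisymm (Real.sqrt_eq_zero'.mp h0) (val_nonneg Fi Fj T₀)
      have hae := (integral_eq_zero_iff_of_nonneg (fun z => sq_nonneg _)
        (hInt Fi memi Fj memj T₀ hT₀)).mp hval
      refine ⟨T₀, hT₀, ?_⟩
      filter_upwards [hae] with z hz
      have hz' : D (Fi z) (Measure.map T₀ (Fj z)) = 0 := by
        have := hz
        simp only [Pi.zero_apply] at this
        exact pow_eq_zero_iff two_ne_zero |>.mp this
      exact (hD_eq_zero _ (hFi z) _ (hG_closed _ (hFj z) _ hT₀)).mp hz'
    · rintro ⟨T, hT, hae⟩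
      have hval : (∫ z, D (Fi z) (Measure.map T (Fj z)) ^ 2 ∂Q) = 0 := by
        rw [← integral_zero Z ℝ (μ := Q)]
        refine integral_congr_ae ?_
        filter_upwards [hae] with z hz
        rw [hz, (hD_eq_zero _ (hG_closed _ (hFj z) _ hT) _ (hG_closed _ (hFj z) _ hT)).mpr rfl]
        norm_num
      have hle : (∫ z, D (Fi z) (Measure.map T₀ (Fj z)) ^ 2 ∂Q) ≤ 0 :=
        hval ▸ hmin₀ T hT
      rw [le_antisymm hle (val_nonneg Fi Fj T₀), Real.sqrt_zero]
  exact ⟨hsymm, htriangle, hzero⟩
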